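/- arXiv:2109.11975 — 7 statements merged into one kernel-verified Lean document; each statement's English description precedes it below -/
import Mathlib

section
/- The Adler map H_V(u,v) = (v - (p-q)/(u+v), u + (p-q)/(u+v)), defined on pairs of elements of a field (where u+v ≠ 0), satisfies the Yang-Baxter relation R₁₂ ∘ R₁₃ ∘ R₂₃ = R₂₃ ∘ R₁₃ ∘ R₁₂ with parameters p, q, r attached to the three factors. -/
/-- The Adler map with parameters (a,b). -/
def adlerR {K : Type*} [Field K] (a b : K) (t : K × K) : K × K :=
  (t.2 - (a - b) / (t.1 + t.2), t.1 + (a - b) / (t.1 + t.2))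

def adlerR12 {K : Type*} [Field K] (a b : K) (t : K × K × K) : K × K × K :=
  ((adlerR a b (t.1, t.2.1)).1, (adlerR a b (t.1, t.2.1)).2, t.2.2)

def adlerR13 {K : Type*} [Field K] (a b : K) (t : K × K × K) : K × K × K :=
  ((adlerR a b (t.1, t.2.2)).1, t.2.1, (adlerR a b (t.1, t.2.2)).2)

def adlerR23 {K : Type*} [Field K] (a b : K) (t : K × K × K) : K × K × K :=
  (t.1, adlerR a b (t.2.1, t.2.2))

/-- The Adler map satisfies the parametric Yang-Baxter relation. -/
theorem adler_yang_baxter {K : Type*} [Field K] (p q r u v w : K)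
    (h1 : v + w ≠ 0)
    (h2 : (adlerR23 q r (u, v, w)).1 + (adlerR23 q r (u, v, w)).2.2 ≠ 0)
    (h3 : (adlerR13 p r (adlerR23 q r (u, v, w))).1
        + (adlerR13 p r (adlerR23 q r (u, v, w))).2.1 ≠ 0)
    (h4 : u + v ≠ 0)
    (h5 : (adlerR12 p q (u, v, w)).1 + (adlerR12 p q (u, v, w)).2.2 ≠ 0)
    (h6 : (adlerR13 p r (adlerR12 p q (u, v, w))).2.1
        + (adlerR13 p r (adlerR12 p q (u, v, w))).2.2 ≠ 0) :
    adlerR12 p q (adlerR13 p r (adlerR23 q r (u, v, w)))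
      = adlerR23 q r (adlerR13 p r (adlerR12 p q (u, v, w))) := by
  simp only [adlerR12, adlerR13, adlerR23, adlerR] at h1 h2 h3 h4 h5 h6 ⊢
  have e2 : u + (v + (q - r) / (v + w)) = ((u+v)*(v+w)+(q-r)) / (v + w) := by
    field_simp; ring
  rw [e2] at h2 h3 ⊢
  have hP2 : (u+v)*(v+w)+(q-r) ≠ 0 := fun hc => h2 (by rw [hc, zero_div])
  rw [div_div_eq_mul_div] at h3 ⊢
  have e3 : v + (q - r) / (v + w) - (p-r)*(v+w) / ((u+v)*(v+w)+(q-r)) + (w - (q - r) / (v + w))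
      = (v+w)*((u+v)*(v+w)+(q-r)-(p-r)) / ((u+v)*(v+w)+(q-r)) := by
    rw [eq_div_iff hP2]
    linear_combination (-1:K) * div_mul_cancel₀ ((p-r)*(v+w)) hP2
  rw [e3] at h3 ⊢
  have hP3 : (u+v)*(v+w)+(q-r)-(p-r) ≠ 0 :=
    fun hc => h3 (by rw [hc, mul_zero, zero_div])
  rw [div_div_eq_mul_div]
  have e5 : v - (p - q) / (u + v) + w = ((v+w)*(u+v)-(p-q)) / (u + v) := by
    field_simp; ring
  rw [e5] at h5 h6 ⊢
  have hP5 : (v+w)*(u+v)-(p-q) ≠ 0 := fun hc => h5 (by rw [hc, zero_div])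
  rw [div_div_eq_mul_div] at h6 ⊢
  have e6 : u + (p - q) / (u + v) + (v - (p - q) / (u + v) + (p-r)*(u+v) / ((v+w)*(u+v)-(p-q)))
      = (u+v)*((v+w)*(u+v)-(p-q)+(p-r)) / ((v+w)*(u+v)-(p-q)) := by
    rw [eq_div_iff hP5]
    linear_combination div_mul_cancel₀ ((p-r)*(u+v)) hP5
  rw [e6] at h6 ⊢
  have hP6 : (v+w)*(u+v)-(p-q)+(p-r) ≠ 0 :=
    fun hc => h6 (by rw [hc, mul_zero, zero_div])
  rw [div_div_eq_mul_div]
  refine Prod.ext ?_ (Prod.ext ?_ ?_) <;> simp only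
  all_goals
    clear e2 e3 e5 e6 h2 h3 h5 h6
    generalize eP3 : (u+v)*(v+w)+(q-r)-(p-r) = P3 at hP3 ⊢
    generalize eP6 : (v+w)*(u+v)-(p-q)+(p-r) = P6 at hP6 ⊢
    generalize eP2 : (u+v)*(v+w)+(q-r) = P2 at hP2 ⊢
    generalize eP5 : (v+w)*(u+v)-(p-q) = P5 at hP5 ⊢
    field_simp
    subst eP3 eP6 eP2 eP5
    ring
end

section
/- If φ: X → X is a symmetry of a Yang-Baxter map R: X × X → X × X (i.e., (φ × φ) ∘ R = R ∘ (φ × φ) and φ is a bijection), then the map R̂ = (φ⁻¹ × id) ∘ R ∘ (id × φ) is also a Yang-Baxter map. -/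
def ybR12 {X : Type*} (R : X × X → X × X) (t : X × X × X) : X × X × X :=
  ((R (t.1, t.2.1)).1, (R (t.1, t.2.1)).2, t.2.2)

def ybR13 {X : Type*} (R : X × X → X × X) (t : X × X × X) : X × X × X :=
  ((R (t.1, t.2.2)).1, t.2.1, (R (t.1, t.2.2)).2)

def ybR23 {X : Type*} (R : X × X → X × X) (t : X × X × X) : X × X × X :=
  (t.1, R (t.2.1, t.2.2))

/-- A map satisfies the Yang-Baxter relation. -/
def IsYangBaxter {X : Type*} (R : X × X → X × X) : Prop :=
  ybR12 R ∘ ybR13 R ∘ ybR23 R = ybR23 R ∘ ybR13 R ∘ ybR12 R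

/-- If φ is a symmetry of a Yang-Baxter map R, then
    (φ⁻¹ × id) ∘ R ∘ (id × φ) is also a Yang-Baxter map. -/
theorem yangBaxter_twist_by_symmetry {X : Type*} (R : X × X → X × X) (φ : X ≃ X)
    (hR : IsYangBaxter R)
    (hsym : (fun t : X × X => (φ t.1, φ t.2)) ∘ R
          = R ∘ (fun t : X × X => (φ t.1, φ t.2))) :
    IsYangBaxter ((fun t : X × X => (φ.symm t.1, t.2)) ∘ R ∘
      (fun t : X × X => (t.1, φ t.2))) := by
  have hs : ∀ u v : X, R (φ u, φ v) = (φ (R (u, v)).1, φ (R (u, v)).2) :=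
    fun u v => (congrFun hsym (u, v)).symm
  have hs' : ∀ u v : X, R (u, φ v)
      = (φ (R (φ.symm u, v)).1, φ (R (φ.symm u, v)).2) := by
    intro u v
    have := hs (φ.symm u) v
    simpa using this
  set g : X × X × X → X × X × X :=
    fun t => (φ.symm (φ.symm t.1), φ.symm t.2.1, t.2.2) with hg
  set h : X × X × X → X × X × X :=
    fun t => (t.1, φ t.2.1, φ (φ t.2.2)) with hh
  set S : X × X → X × X := (fun t : X × X => (φ.symm t.1, t.2)) ∘ R ∘
      (fun t : X × X => (t.1, φ t.2)) with hS
  have A : ybR12 S ∘ ybR13 S ∘ ybR23 S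
      = g ∘ (ybR12 R ∘ ybR13 R ∘ ybR23 R) ∘ h := by
    funext t
    obtain ⟨a, b, c⟩ := t
    simp only [hS, hg, hh, Function.comp_apply, ybR12, ybR13, ybR23]
    simp [hs']
  have B : ybR23 S ∘ ybR13 S ∘ ybR12 S
      = g ∘ (ybR23 R ∘ ybR13 R ∘ ybR12 R) ∘ h := by
    funext t
    obtain ⟨a, b, c⟩ := t
    simp only [hS, hg, hh, Function.comp_apply, ybR12, ybR13, ybR23]
    simp [hs']
  show ybR12 S ∘ ybR13 S ∘ ybR23 S = ybR23 S ∘ ybR13 S ∘ ybR12 S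
  rw [A, B, hR]
end

section
/- Let D be a division ring and λ a central element of D. For the non-abelian Adler companion map c𝓗_V: (x¹,x²,v¹,v²) ↦ (u¹,u²,y¹,y²) given by u¹ = (v¹(v¹−x¹) + v²v¹ − x²x¹)(x¹−v¹)⁻¹, u² = (v¹−x¹)x²x¹((v¹+x²)x¹ − (v¹+v²)v¹)⁻¹, y¹ = (x¹(x¹−v¹) + x²x¹ − v²v¹)(v¹−x¹)⁻¹, y² = (x¹−v¹)v²v¹((x¹+v²)v¹ − (x¹+x²)x¹)⁻¹, the Lax equation L(u¹,u²;λ)·L(v¹,v²;λ) = L(y¹,y²;λ)·L(x¹,x²;λ) holds, where L(x¹,x²;λ) is the 2×2 matrix with entries [[x¹, (x¹+x²)x¹ − λ], [1, x¹]]. -/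
/-- The Lax matrix of the non-abelian Adler companion map. -/
def laxHV {D : Type*} [DivisionRing D] (x1 x2 l : D) : Matrix (Fin 2) (Fin 2) D :=
  !![x1, (x1 + x2) * x1 - l; 1, x1]

private theorem matrix2_ext {α : Type*} (a b c d e f g h : α)
    (h1 : a = e) (h2 : b = f) (h3 : c = g) (h4 : d = h) :
    !![a, b; c, d] = !![e, f; g, h] := by
  subst h1 h2 h3 h4; rfl

set_option maxHeartbeats 1000000 in
/-- The Lax equation for the non-abelian Adler companion map c𝓗_V. -/
theorem cHV_lax_equation {D : Type*} [DivisionRing D] (l x1 x2 v1 v2 : D)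
    (hl : l ∈ Set.center D)
    (h1 : x1 - v1 ≠ 0)
    (h2 : (v1 + x2) * x1 - (v1 + v2) * v1 ≠ 0)
    (h3 : (x1 + v2) * v1 - (x1 + x2) * x1 ≠ 0) :
    laxHV ((v1 * (v1 - x1) + v2 * v1 - x2 * x1) * (x1 - v1)⁻¹)
          ((v1 - x1) * x2 * x1 * ((v1 + x2) * x1 - (v1 + v2) * v1)⁻¹) l
      * laxHV v1 v2 l
    = laxHV ((x1 * (x1 - v1) + x2 * x1 - v2 * v1) * (v1 - x1)⁻¹)
            ((x1 - v1) * v2 * v1 * ((x1 + v2) * v1 - (x1 + x2) * x1)⁻¹) l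
      * laxHV x1 x2 l := by
  have hcl : ∀ b : D, l * b = b * l := (Set.mem_center_iff.mp hl).comm
  set q : D := (x1 - v1)⁻¹ with hqdef
  have hqp : q * (x1 - v1) = 1 := inv_mul_cancel₀ h1
  have hpq : (x1 - v1) * q = 1 := mul_inv_cancel₀ h1
  set w : D := (v2 * v1 - x2 * x1) * q with hwdef
  have hu1 : (v1 * (v1 - x1) + v2 * v1 - x2 * x1) * q = w - v1 := by
    rw [show v1 * (v1 - x1) + v2 * v1 - x2 * x1
        = (v2 * v1 - x2 * x1) - v1 * (x1 - v1) by noncomm_ring,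
      sub_mul, mul_assoc, hpq, mul_one, hwdef]
  have hy1 : (x1 * (x1 - v1) + x2 * x1 - v2 * v1) * (v1 - x1)⁻¹ = w - x1 := by
    rw [show (v1 - x1)⁻¹ = -q by rw [hqdef, ← inv_neg, neg_sub],
      mul_neg,
      show x1 * (x1 - v1) + x2 * x1 - v2 * v1
        = x1 * (x1 - v1) - (v2 * v1 - x2 * x1) by noncomm_ring,
      sub_mul, mul_assoc, hpq, mul_one, neg_sub, hwdef]
  have hu2 : (v1 - x1) * x2 * x1 * ((v1 + x2) * x1 - (v1 + v2) * v1)⁻¹ * (w - v1)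
      = (x1 - v1) * (x2 * x1) * q := by
    rw [show w - v1 = -(((v1 + x2) * x1 - (v1 + v2) * v1) * q) by
        rw [show (v1 + x2) * x1 - (v1 + v2) * v1
            = v1 * (x1 - v1) - (v2 * v1 - x2 * x1) by noncomm_ring,
          sub_mul, mul_assoc, hpq, mul_one, neg_sub, hwdef],
      mul_neg, ← mul_assoc, mul_assoc ((v1 - x1) * x2 * x1), inv_mul_cancel₀ h2, mul_one]
    noncomm_ring
  have hy2 : (x1 - v1) * v2 * v1 * ((x1 + v2) * v1 - (x1 + x2) * x1)⁻¹ * (w - x1)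
      = (x1 - v1) * (v2 * v1) * q := by
    rw [show w - x1 = ((x1 + v2) * v1 - (x1 + x2) * x1) * q by
        rw [show (x1 + v2) * v1 - (x1 + x2) * x1
            = (v2 * v1 - x2 * x1) - x1 * (x1 - v1) by noncomm_ring,
          sub_mul, mul_assoc, hpq, mul_one, hwdef],
      ← mul_assoc, mul_assoc ((x1 - v1) * v2 * v1), inv_mul_cancel₀ h3, mul_one]
    noncomm_ring
  have hu2' : (w - v1 + (v1 - x1) * x2 * x1 * ((v1 + x2) * x1 - (v1 + v2) * v1)⁻¹)
        * (w - v1)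
      = (w - v1) * (w - v1) + (x1 - v1) * (x2 * x1) * q := by
    rw [add_mul, hu2]
  have hy2' : (w - x1 + (x1 - v1) * v2 * v1 * ((x1 + v2) * v1 - (x1 + x2) * x1)⁻¹)
        * (w - x1)
      = (w - x1) * (w - x1) + (x1 - v1) * (v2 * v1) * q := by
    rw [add_mul, hy2]
  rw [hu1, hy1]
  simp only [laxHV]
  rw [Matrix.mul_fin_two, Matrix.mul_fin_two, hu2', hy2', hwdef]
  refine matrix2_ext _ _ _ _ _ _ _ _ ?_ ?_ ?_ ?_
  · -- entry (0,0)
    noncomm_ring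
  · -- entry (0,1)
    rw [← sub_eq_zero,
      show (0 : D) =
        -(x2 * ((x1 - v1) * q - 1) * v2 * v1)
        - v2 * v1 * q * x2 * ((x1 - v1) * q - 1) * v1
        - x2 * ((x1 - v1) * q - 1) * v2 * v1 * q * v1
        + x2 * ((x1 - v1) * q - 1) * x2 * x1 * q * v1
        + x1 * x2 * ((x1 - v1) * q - 1) * v1
        - (1:D) * (l * v1 - v1 * l) * (1:D)
        + x2 * ((x1 - v1) * q - 1) * x2 * x1
        - v2 * v1 * q * v2 * v1 * (q * (x1 - v1) - 1) * (1:D)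
        + v2 * v1 * q * x2 * ((x1 - v1) * q - 1) * x1
        + x2 * ((x1 - v1) * q - 1) * v2 * v1 * q * x1
        - x2 * ((x1 - v1) * q - 1) * x2 * x1 * q * x1
        - x1 * x2 * ((x1 - v1) * q - 1) * x1
        + v1 * v2 * v1 * (q * (x1 - v1) - 1) * (1:D)
        + (1:D) * (l * x1 - x1 * l) * (1:D)
        + x2 * v1 * q * x2 * ((x1 - v1) * q - 1) * v1
        + x2 * x2 * ((x1 - v1) * q - 1) * v1
        + v2 * v1 * q * x2 * v1 * (q * (x1 - v1) - 1) * (1:D)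
        + x2 * v1 * q * v2 * v1 * (q * (x1 - v1) - 1) * (1:D)
        + x2 * v2 * v1 * (q * (x1 - v1) - 1) * (1:D)
        - x2 * v1 * q * x2 * ((x1 - v1) * q - 1) * x1
        - x2 * x2 * ((x1 - v1) * q - 1) * x1
        - x1 * x2 * v1 * (q * (x1 - v1) - 1) * (1:D)
        - x2 * v1 * q * x2 * v1 * (q * (x1 - v1) - 1) * (1:D)
        - x2 * x2 * v1 * (q * (x1 - v1) - 1) * (1:D)
      by rw [hpq, hqp, hcl v1, hcl x1]; simp]
    noncomm_ring
  · -- entry (1,0)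
    noncomm_ring
  · -- entry (1,1)
    rw [← sub_eq_zero,
      show (0 : D) =
        -(x2 * ((x1 - v1) * q - 1) * v1)
        - v2 * v1 * (q * (x1 - v1) - 1) * (1:D)
        + x2 * ((x1 - v1) * q - 1) * x1
        + x2 * v1 * (q * (x1 - v1) - 1) * (1:D)
      by rw [hpq, hqp]; simp]
    noncomm_ring
end

section
/- The map φ: (z¹,z²) ↦ (−z¹,−z²) is a symmetry of the non-abelian map c𝓗_V, i.e., (φ × φ) ∘ c𝓗_V = c𝓗_V ∘ (φ × φ). -/
/-- The non-abelian Adler companion map c𝓗_V. -/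
def cHV {D : Type*} [DivisionRing D] (t : D × D × D × D) : D × D × D × D :=
  let x1 := t.1; let x2 := t.2.1; let v1 := t.2.2.1; let v2 := t.2.2.2
  ((v1 * (v1 - x1) + v2 * v1 - x2 * x1) * (x1 - v1)⁻¹,
   (v1 - x1) * x2 * x1 * ((v1 + x2) * x1 - (v1 + v2) * v1)⁻¹,
   (x1 * (x1 - v1) + x2 * x1 - v2 * v1) * (v1 - x1)⁻¹,
   (x1 - v1) * v2 * v1 * ((x1 + v2) * v1 - (x1 + x2) * x1)⁻¹)

/-- φ : (z¹,z²) ↦ (−z¹,−z²) is a symmetry of c𝓗_V. -/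
theorem cHV_neg_symmetry {D : Type*} [DivisionRing D] (x1 x2 v1 v2 : D)
    (h1 : x1 - v1 ≠ 0)
    (h2 : (v1 + x2) * x1 - (v1 + v2) * v1 ≠ 0)
    (h3 : (x1 + v2) * v1 - (x1 + x2) * x1 ≠ 0) :
    cHV (-x1, -x2, -v1, -v2)
      = (-(cHV (x1, x2, v1, v2)).1, -(cHV (x1, x2, v1, v2)).2.1,
         -(cHV (x1, x2, v1, v2)).2.2.1, -(cHV (x1, x2, v1, v2)).2.2.2) := by
  have e1 : (-x1 - -v1 : D) = -(x1 - v1) := by abel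
  have e2 : (-v1 - -x1 : D) = x1 - v1 := by abel
  have e3 : (v1 - x1 : D) = -(x1 - v1) := by abel
  have e4 : ((-v1 + -x2) * -x1 - (-v1 + -v2) * -v1 : D)
      = (v1 + x2) * x1 - (v1 + v2) * v1 := by noncomm_ring
  have e5 : ((-x1 + -v2) * -v1 - (-x1 + -x2) * -x1 : D)
      = (x1 + v2) * v1 - (x1 + x2) * x1 := by noncomm_ring
  simp only [cHV, Prod.mk.injEq, e1, e2, e3, e4, e5, inv_neg]
  refine ⟨?_, ?_, ?_, ?_⟩ <;> noncomm_ring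
end

section
/- In a commutative field, the non-abelian map c𝓗_V preserves the products of the two components of each point: if c𝓗_V(x¹,x²,v¹,v²) = (u¹,u²,y¹,y²), then u²u¹ = x²x¹ and y²y¹ = v²v¹. -/
/-- In the commutative setting, c𝓗_V preserves the products of the two
components of each point. -/
theorem cHV_product_invariants {K : Type*} [Field K] (x1 x2 v1 v2 u1 u2 y1 y2 : K)
    (h1 : x1 - v1 ≠ 0)
    (h2 : (v1 + x2) * x1 - (v1 + v2) * v1 ≠ 0)
    (h3 : (x1 + v2) * v1 - (x1 + x2) * x1 ≠ 0)
    (hu1 : u1 = (v1 * (v1 - x1) + v2 * v1 - x2 * x1) * (x1 - v1)⁻¹)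
    (hu2 : u2 = (v1 - x1) * x2 * x1 * ((v1 + x2) * x1 - (v1 + v2) * v1)⁻¹)
    (hy1 : y1 = (x1 * (x1 - v1) + x2 * x1 - v2 * v1) * (v1 - x1)⁻¹)
    (hy2 : y2 = (x1 - v1) * v2 * v1 * ((x1 + v2) * v1 - (x1 + x2) * x1)⁻¹) :
    u2 * u1 = x2 * x1 ∧ y2 * y1 = v2 * v1 := by
  have h4 : v1 - x1 ≠ 0 := fun h => h1 (by linear_combination -h)
  subst hu1 hu2 hy1 hy2
  constructor
  · linear_combination x2 * x1 * ((x1 - v1) * (x1 - v1)⁻¹) * mul_inv_cancel₀ h2 + x2 * x1 * mul_inv_cancel₀ h1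
  · linear_combination v2 * v1 * ((v1 - x1) * (v1 - x1)⁻¹) * mul_inv_cancel₀ h3 + v2 * v1 * mul_inv_cancel₀ h4
end

section
/- Let K be a field and p, q ∈ K. The map F_V: (u,v) ↦ (x,y) with x = v + (p−q)/(u−v), y = u + (p−q)/(u−v) (defined when u ≠ v) satisfies the parametric Yang-Baxter relation R₁₂ ∘ R₁₃ ∘ R₂₃ = R₂₃ ∘ R₁₃ ∘ R₁₂ on K³ with parameters p, q, r, assuming all denominators encountered are nonzero. -/
/-- The map F_V with parameters (a,b). -/
def FVR {K : Type*} [Field K] (a b : K) (t : K × K) : K × K :=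
  (t.2 + (a - b) / (t.1 - t.2), t.1 + (a - b) / (t.1 - t.2))

def FVR12 {K : Type*} [Field K] (a b : K) (t : K × K × K) : K × K × K :=
  ((FVR a b (t.1, t.2.1)).1, (FVR a b (t.1, t.2.1)).2, t.2.2)

def FVR13 {K : Type*} [Field K] (a b : K) (t : K × K × K) : K × K × K :=
  ((FVR a b (t.1, t.2.2)).1, t.2.1, (FVR a b (t.1, t.2.2)).2)

def FVR23 {K : Type*} [Field K] (a b : K) (t : K × K × K) : K × K × K :=
  (t.1, FVR a b (t.2.1, t.2.2))

set_option maxHeartbeats 4000000 in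
/-- F_V satisfies the parametric Yang-Baxter relation. -/
theorem FV_yang_baxter {K : Type*} [Field K] (p q r u v w : K)
    (h1 : v - w ≠ 0)
    (h2 : (FVR23 q r (u, v, w)).1 - (FVR23 q r (u, v, w)).2.2 ≠ 0)
    (h3 : (FVR13 p r (FVR23 q r (u, v, w))).1
        - (FVR13 p r (FVR23 q r (u, v, w))).2.1 ≠ 0)
    (h4 : u - v ≠ 0)
    (h5 : (FVR12 p q (u, v, w)).1 - (FVR12 p q (u, v, w)).2.2 ≠ 0)
    (h6 : (FVR13 p r (FVR12 p q (u, v, w))).2.1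
        - (FVR13 p r (FVR12 p q (u, v, w))).2.2 ≠ 0) :
    FVR12 p q (FVR13 p r (FVR23 q r (u, v, w)))
      = FVR23 q r (FVR13 p r (FVR12 p q (u, v, w))) := by
  simp only [FVR12, FVR13, FVR23, FVR] at *
  have e2 : u - (v + (q - r) / (v - w)) = ((u - v) * (v - w) - (q - r)) / (v - w) := by
    field_simp; ring
  have e5 : v + (p - q) / (u - v) - w = ((u - v) * (v - w) + (p - q)) / (u - v) := by
    field_simp; ring
  have hA2 : (u - v) * (v - w) - (q - r) ≠ 0 := by
    rw [e2] at h2; exact fun h => h2 (by rw [h, zero_div])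
  have hA3 : (u - v) * (v - w) + (p - q) ≠ 0 := by
    rw [e5] at h5; exact fun h => h5 (by rw [h, zero_div])
  have Eb : (p - r) / (u - (v + (q - r) / (v - w)))
      = (p - r) * (v - w) / ((u - v) * (v - w) - (q - r)) := by
    rw [e2, div_div_eq_mul_div]
  have Ee : (p - r) / (v + (p - q) / (u - v) - w)
      = (p - r) * (u - v) / ((u - v) * (v - w) + (p - q)) := by
    rw [e5, div_div_eq_mul_div]
  have Ecden : v + (q - r) / (v - w) + (p - r) / (u - (v + (q - r) / (v - w)))
        - (w + (q - r) / (v - w))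
      = (v - w) * ((u - v) * (v - w) + (p - q)) / ((u - v) * (v - w) - (q - r)) := by
    rw [Eb]; generalize eA : (u - v) * (v - w) - (q - r) = A at hA2 ⊢; field_simp; subst eA; ring
  have Efden : u + (p - q) / (u - v)
        - (v + (p - q) / (u - v) + (p - r) / (v + (p - q) / (u - v) - w))
      = (u - v) * ((u - v) * (v - w) - (q - r)) / ((u - v) * (v - w) + (p - q)) := by
    rw [Ee]; generalize eB : (u - v) * (v - w) + (p - q) = B at hA3 ⊢; field_simp; subst eB; ring
  have Ec : (p - q) / (v + (q - r) / (v - w) + (p - r) / (u - (v + (q - r) / (v - w)))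
        - (w + (q - r) / (v - w)))
      = (p - q) * ((u - v) * (v - w) - (q - r))
        / ((v - w) * ((u - v) * (v - w) + (p - q))) := by
    rw [Ecden, div_div_eq_mul_div]
  have Ef : (q - r) / (u + (p - q) / (u - v)
        - (v + (p - q) / (u - v) + (p - r) / (v + (p - q) / (u - v) - w)))
      = (q - r) * ((u - v) * (v - w) + (p - q))
        / ((u - v) * ((u - v) * (v - w) - (q - r))) := by
    rw [Efden, div_div_eq_mul_div]
  rw [Ec, Ef, Eb, Ee]
  refine Prod.ext ?_ (Prod.ext ?_ ?_) <;> simp only <;> generalize eA : (u - v) * (v - w) - (q - r) = A at hA2 ⊢ <;> generalize eB : (u - v) * (v - w) + (p - q) = B at hA3 ⊢ <;> field_simp <;> subst eA eB <;> ring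
end

section
/- Let K be a field, p, q ∈ K, and u, v ∈ K with uv + p ≠ 0 and uv + q ≠ 0. The map Λ_III: (u,v) ↦ (x,y) with x = v(uv+p)/(uv+q), y = u(uv+q)/(uv+p) satisfies x·y = u·v, and satisfies the parametric Yang-Baxter relation R₁₂ ∘ R₁₃ ∘ R₂₃ = R₂₃ ∘ R₁₃ ∘ R₁₂ on K³ with parameters p, q, r, assuming all denominators encountered are nonzero. -/
set_option maxHeartbeats 4000000


/-- The map Λ_III with parameters (a,b). -/
def LIIIR {K : Type*} [Field K] (a b : K) (t : K × K) : K × K :=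
  (t.2 * (t.1 * t.2 + a) / (t.1 * t.2 + b), t.1 * (t.1 * t.2 + b) / (t.1 * t.2 + a))

def LIIIR12 {K : Type*} [Field K] (a b : K) (t : K × K × K) : K × K × K :=
  ((LIIIR a b (t.1, t.2.1)).1, (LIIIR a b (t.1, t.2.1)).2, t.2.2)

def LIIIR13 {K : Type*} [Field K] (a b : K) (t : K × K × K) : K × K × K :=
  ((LIIIR a b (t.1, t.2.2)).1, t.2.1, (LIIIR a b (t.1, t.2.2)).2)

def LIIIR23 {K : Type*} [Field K] (a b : K) (t : K × K × K) : K × K × K :=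
  (t.1, LIIIR a b (t.2.1, t.2.2))

/-- Λ_III preserves the product and satisfies the parametric Yang-Baxter
relation. -/
theorem Lambda_III_yang_baxter {K : Type*} [Field K] (p q r u v w : K)
    (hp1 : u * v + p ≠ 0) (hq1 : u * v + q ≠ 0)
    (h1a : v * w + q ≠ 0) (h1b : v * w + r ≠ 0)
    (h2a : (LIIIR23 q r (u, v, w)).1 * (LIIIR23 q r (u, v, w)).2.2 + p ≠ 0)
    (h2b : (LIIIR23 q r (u, v, w)).1 * (LIIIR23 q r (u, v, w)).2.2 + r ≠ 0)
    (h3a : (LIIIR13 p r (LIIIR23 q r (u, v, w))).1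
         * (LIIIR13 p r (LIIIR23 q r (u, v, w))).2.1 + p ≠ 0)
    (h3b : (LIIIR13 p r (LIIIR23 q r (u, v, w))).1
         * (LIIIR13 p r (LIIIR23 q r (u, v, w))).2.1 + q ≠ 0)
    (h5a : (LIIIR12 p q (u, v, w)).1 * (LIIIR12 p q (u, v, w)).2.2 + p ≠ 0)
    (h5b : (LIIIR12 p q (u, v, w)).1 * (LIIIR12 p q (u, v, w)).2.2 + r ≠ 0)
    (h6a : (LIIIR13 p r (LIIIR12 p q (u, v, w))).2.1
         * (LIIIR13 p r (LIIIR12 p q (u, v, w))).2.2 + q ≠ 0)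
    (h6b : (LIIIR13 p r (LIIIR12 p q (u, v, w))).2.1
         * (LIIIR13 p r (LIIIR12 p q (u, v, w))).2.2 + r ≠ 0) :
    (v * (u * v + p) / (u * v + q)) * (u * (u * v + q) / (u * v + p)) = u * v ∧
    LIIIR12 p q (LIIIR13 p r (LIIIR23 q r (u, v, w)))
      = LIIIR23 q r (LIIIR13 p r (LIIIR12 p q (u, v, w))) := by
  simp only [LIIIR12, LIIIR13, LIIIR23, LIIIR] at h2a h2b h3a h3b h5a h5b h6a h6b ⊢
  field_simp at h2a h2b h5a h5b
  replace h2a : u * (v * (v * w + r)) + p * (v * w + q) ≠ 0 := by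
    intro h; apply h2a; rw [div_eq_zero_iff]; left; linear_combination h
  replace h2b : u * (v * (v * w + r)) + r * (v * w + q) ≠ 0 := by
    intro h; apply h2b; rw [div_eq_zero_iff]; left; linear_combination h
  replace h5a : v * (u * v + p) * w + p * (u * v + q) ≠ 0 := by
    intro h; apply h5a; rw [div_eq_zero_iff]; left; linear_combination h
  replace h5b : v * (u * v + p) * w + r * (u * v + q) ≠ 0 := by
    intro h; apply h5b; rw [div_eq_zero_iff]; left; linear_combination h
  field_simp at h3a h3b h6a h6b
  have hB : v * (v * w + r) * u + r * (v * w + q) ≠ 0 := by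
    intro h; exact h2b (by linear_combination h)
  have hq' : v * u + q ≠ 0 := by intro h; exact hq1 (by linear_combination h)
  have hp' : v * u + p ≠ 0 := by intro h; exact hp1 (by linear_combination h)
  have hY : (v * u + q) * (v * u + p) * (v * w * (v * u + p) / (v * u + q) + p) ≠ 0 := by
    refine mul_ne_zero (mul_ne_zero hq' hp') ?_
    rw [div_add' _ _ _ hq']
    exact div_ne_zero (by intro h; apply h5a; linear_combination h) hq'
  have hD3a : (v * w * (u * (v * (v * w + r)) + p * (v * w + q)) + p * (u * (v * (v * w + r)) + r * (v * w + q))) ≠ 0 := by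
    intro h; apply h3a; rw [div_add' _ _ _ hB, div_eq_zero_iff]; left; linear_combination h
  have hD3b : (v * w * (u * (v * (v * w + r)) + p * (v * w + q)) + q * (u * (v * (v * w + r)) + r * (v * w + q))) ≠ 0 := by
    intro h; apply h3b; rw [div_add' _ _ _ hB, div_eq_zero_iff]; left; linear_combination h
  have hE6a : (u * v * (v * (u * v + p) * w + r * (u * v + q)) + q * (v * (u * v + p) * w + p * (u * v + q))) ≠ 0 := by
    intro h; apply h6a; rw [div_add' _ _ _ hY, div_eq_zero_iff]; left; field_simp
    linear_combination (v * u + p) * h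
  have hE6b : (u * v * (v * (u * v + p) * w + r * (u * v + q)) + r * (v * (u * v + p) * w + p * (u * v + q))) ≠ 0 := by
    intro h; apply h6b; rw [div_add' _ _ _ hY, div_eq_zero_iff]; left; field_simp
    linear_combination (v * u + p) * h
  refine ⟨by field_simp, ?_⟩
  have e1 : u * (v * (v * w + r) / (v * w + q)) + p = (u * (v * (v * w + r)) + p * (v * w + q)) / (v * w + q) := by field_simp
  have e2 : u * (v * (v * w + r) / (v * w + q)) + r = (u * (v * (v * w + r)) + r * (v * w + q)) / (v * w + q) := by field_simp
  rw [e1, e2]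
  have hM : v * (v * w + r) / (v * w + q) * ((u * (v * (v * w + r)) + p * (v * w + q)) / (v * w + q)) / ((u * (v * (v * w + r)) + r * (v * w + q)) / (v * w + q)) * (w * (v * w + q) / (v * w + r))
      = v * w * (u * (v * (v * w + r)) + p * (v * w + q)) / (u * (v * (v * w + r)) + r * (v * w + q)) := by
    field_simp
  rw [hM]
  have hU2 : v * (v * w + r) / (v * w + q) * ((u * (v * (v * w + r)) + p * (v * w + q)) / (v * w + q)) / ((u * (v * (v * w + r)) + r * (v * w + q)) / (v * w + q))
      = v * (v * w + r) * (u * (v * (v * w + r)) + p * (v * w + q)) / ((v * w + q) * (u * (v * (v * w + r)) + r * (v * w + q))) := by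
    field_simp
  rw [hU2]
  have e3 : v * w * (u * (v * (v * w + r)) + p * (v * w + q)) / (u * (v * (v * w + r)) + r * (v * w + q)) + p = (v * w * (u * (v * (v * w + r)) + p * (v * w + q)) + p * (u * (v * (v * w + r)) + r * (v * w + q))) / (u * (v * (v * w + r)) + r * (v * w + q)) := by rw [div_add' _ _ _ h2b]
  have e4 : v * w * (u * (v * (v * w + r)) + p * (v * w + q)) / (u * (v * (v * w + r)) + r * (v * w + q)) + q = (v * w * (u * (v * (v * w + r)) + p * (v * w + q)) + q * (u * (v * (v * w + r)) + r * (v * w + q))) / (u * (v * (v * w + r)) + r * (v * w + q)) := by rw [div_add' _ _ _ h2b]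
  rw [e3, e4]
  have f1 : v * (u * v + p) / (u * v + q) * w + p = (v * (u * v + p) * w + p * (u * v + q)) / (u * v + q) := by field_simp
  have f2 : v * (u * v + p) / (u * v + q) * w + r = (v * (u * v + p) * w + r * (u * v + q)) / (u * v + q) := by field_simp
  rw [f1, f2]
  have hC : v * (u * v + p) / (u * v + q) * ((v * (u * v + p) * w + r * (u * v + q)) / (u * v + q)) / ((v * (u * v + p) * w + p * (u * v + q)) / (u * v + q))
      = v * (u * v + p) * (v * (u * v + p) * w + r * (u * v + q)) / ((u * v + q) * (v * (u * v + p) * w + p * (u * v + q))) := by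
    field_simp
  rw [hC]
  have g1 : u * (u * v + q) / (u * v + p) * (v * (u * v + p) * (v * (u * v + p) * w + r * (u * v + q)) / ((u * v + q) * (v * (u * v + p) * w + p * (u * v + q)))) + q
      = (u * v * (v * (u * v + p) * w + r * (u * v + q)) + q * (v * (u * v + p) * w + p * (u * v + q))) / (v * (u * v + p) * w + p * (u * v + q)) := by
    rw [div_mul_div_comm, div_add' _ _ _ (mul_ne_zero hp1 (mul_ne_zero hq1 h5a)), div_eq_div_iff (mul_ne_zero hp1 (mul_ne_zero hq1 h5a)) h5a]
    ring
  have g2 : u * (u * v + q) / (u * v + p) * (v * (u * v + p) * (v * (u * v + p) * w + r * (u * v + q)) / ((u * v + q) * (v * (u * v + p) * w + p * (u * v + q)))) + r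
      = (u * v * (v * (u * v + p) * w + r * (u * v + q)) + r * (v * (u * v + p) * w + p * (u * v + q))) / (v * (u * v + p) * w + p * (u * v + q)) := by
    rw [div_mul_div_comm, div_add' _ _ _ (mul_ne_zero hp1 (mul_ne_zero hq1 h5a)), div_eq_div_iff (mul_ne_zero hp1 (mul_ne_zero hq1 h5a)) h5a]
    ring
  rw [Prod.mk.injEq, Prod.mk.injEq]
  refine ⟨?_, ?_, ?_⟩
  · field_simp
    rw [div_eq_div_iff (mul_ne_zero (mul_ne_zero (by intro h; exact h1b (by linear_combination h)) (by intro h; exact h2b (by linear_combination h))) (by intro h; exact hD3b (by linear_combination h))) (by intro h; exact h5b (by linear_combination h))]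
    ring
  · rw [g1, g2, div_mul_div_comm, div_div_div_eq, div_mul_div_comm, div_div_div_eq,
      div_eq_div_iff (mul_ne_zero (mul_ne_zero (mul_ne_zero h1a h2b) h2b) hD3a)
        (mul_ne_zero (mul_ne_zero (mul_ne_zero hq1 h5a) h5a) hE6b)]
    ring
  · rw [g1, g2, ← mul_div_assoc, div_div_div_eq, div_mul_div_comm, div_div_div_eq,
      div_eq_div_iff (mul_ne_zero h1a h2a)
        (mul_ne_zero (mul_ne_zero hp1 h5a) hE6a)]
    ring
end
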